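/- Let N be a norm on ℝ². Suppose there exist nonzero vectors x¹, x² ∈ ℝ² and nondegenerate segments I₁, I₂ contained in the boundary of the unit N-ball such that I₁ is parallel to x¹, I₂ is parallel to x², the line { t·x¹ : t ∈ ℝ } through the origin in direction x¹ intersects I₂, and the line { t·x² : t ∈ ℝ } through the origin in direction x² intersects I₁. Then there exists q₀ > 0 such that for all 0 < q < q₀ and for every two-colouring of the plane (every function c : ℝ² → Fin 2) there exists a monochromatic N-isometric copy of the geometric progression G(q). -/

import Mathlib

/-- `N` is a norm on the plane. -/
def IsNorm2 (N : (Fin 2 → ℝ) → ℝ) : Prop :=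
  (∀ x, N x = 0 ↔ x = 0) ∧ (∀ (a : ℝ) (x), N (a • x) = |a| * N x) ∧
  (∀ x y, N (x + y) ≤ N x + N y)

/-- The geometric progression G(q) = {0, 1, 1+q, 1+q+q², …} ⊆ ℝ. -/
def geomProg (q : ℝ) : Set ℝ :=
  {x | x = 0 ∨ ∃ i : ℕ, 1 ≤ i ∧ x = (1 - q ^ i) / (1 - q)}

/-- `M'` is an `N`-isometric copy (in the plane) of the set of reals `M`:
there is a bijection from `M` onto `M'` carrying absolute differences to `N`-distances. -/
def IsometricCopyOfReals (N : (Fin 2 → ℝ) → ℝ) (M : Set ℝ) (M' : Set (Fin 2 → ℝ)) : Prop :=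
  ∃ f : ℝ → (Fin 2 → ℝ), Set.BijOn f M M' ∧ ∀ x ∈ M, ∀ y ∈ M, N (f x - f y) = |x - y|

namespace MixedAux

/-- All data needed for the combinatorial core, after geometric normalization. -/
structure Ctx where
  N : (Fin 2 → ℝ) → ℝ
  u : Fin 2 → ℝ
  v : Fin 2 → ℝ
  σ : ℝ
  ε : ℝ
  q : ℝ
  col : (Fin 2 → ℝ) → Fin 2
  hσ : σ = 1 ∨ σ = -1
  hε0 : 0 < ε
  hq0 : 0 < q
  hqε : 9 * q ≤ ε
  hq1 : 9 * q ≤ 1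
  Hreg : ∀ a b : ℝ, 0 ≤ b → b ≤ ε * a → N (a • u + b • v) = a
  Vreg : ∀ a b : ℝ, 0 ≤ a → a ≤ ε * b → N ((σ * a) • u + b • v) = b
  Nsmul : ∀ (a : ℝ) (x : Fin 2 → ℝ), N (a • x) = |a| * N x
  Hno : ∀ M', IsometricCopyOfReals N (geomProg q) M' →
          ∃ z ∈ M', ∃ w ∈ M', col z ≠ col w

namespace Ctx

variable (C : Ctx)

/-- partial sums of the geometric progression -/
noncomputable def s (i : ℕ) : ℝ := (1 - C.q ^ i) / (1 - C.q)

/-- the limit of the partial sums -/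
noncomputable def L : ℝ := 1 / (1 - C.q)

noncomputable def colr (x y : ℝ) : Fin 2 := C.col (x • C.u + y • C.v)

/-- a solid monochromatic (closed) axis-parallel rectangle in (u,v)-coordinates -/
def Solid (c₀ : Fin 2) (A B w h : ℝ) : Prop :=
  ∀ x y : ℝ, A ≤ x → x ≤ A + w → B ≤ y → y ≤ B + h → C.colr x y = c₀

lemma N0 : C.N 0 = 0 := by
  have h := C.Nsmul 0 0
  simpa using h

lemma Nneg (z : Fin 2 → ℝ) : C.N (-z) = C.N z := by
  have h := C.Nsmul (-1) z
  simpa using h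

lemma σσ : C.σ * C.σ = 1 := by rcases C.hσ with h | h <;> rw [h] <;> norm_num

lemma hq1' : C.q < 1 := by have := C.hq1; have := C.hq0; linarith

lemma one_sub_q_pos : 0 < 1 - C.q := by have := C.hq1'; linarith

lemma L_pos : 0 < C.L := by
  have := C.one_sub_q_pos; exact div_pos one_pos this

lemma L_eq : (1 - C.q) * C.L = 1 := by
  have := C.one_sub_q_pos; rw [Ctx.L, mul_one_div_cancel this.ne']

lemma L_le : C.L ≤ 9/8 := by
  have h := C.one_sub_q_pos
  rw [Ctx.L, div_le_iff₀ h]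
  have := C.hq1; linarith

lemma one_le_L : 1 ≤ C.L := by
  have h := C.one_sub_q_pos
  rw [Ctx.L, le_div_iff₀ h]
  have := C.hq0; linarith

lemma qpow_pos (i : ℕ) : 0 < C.q ^ i := pow_pos C.hq0 i

lemma s0 : C.s 0 = 0 := by simp [Ctx.s]

lemma sSucc (i : ℕ) : C.s (i + 1) = C.s i + C.q ^ i := by
  have h := C.one_sub_q_pos
  rw [Ctx.s, Ctx.s]
  field_simp
  ring

lemma s_strict : StrictMono C.s := by
  apply strictMono_nat_of_lt_succ
  intro i
  rw [C.sSucc i]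
  have := C.qpow_pos i; linarith

lemma s_mono : Monotone C.s := C.s_strict.monotone

lemma s_inj : Function.Injective C.s := C.s_strict.injective

lemma s_nonneg (i : ℕ) : 0 ≤ C.s i := by
  have := C.s_mono (Nat.zero_le i); rw [C.s0] at this; exact this

lemma s_gap (i : ℕ) : C.L - C.s i = C.q ^ i * C.L := by
  have h := C.one_sub_q_pos
  rw [Ctx.L, Ctx.s]
  field_simp
  ring

lemma s_lt_L (i : ℕ) : C.s i < C.L := by
  have h := C.s_gap i
  have h2 := mul_pos (C.qpow_pos i) C.L_pos
  linarith

/-- key size bound: q^(j+1) * L ≤ (ε/8) * q^j -/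
lemma tau_le (j : ℕ) : C.q ^ (j+1) * C.L ≤ C.ε / 8 * C.q ^ j := by
  have h := C.one_sub_q_pos
  have hq := C.hq0
  have hqε := C.hqε
  have hq1 := C.hq1
  have hL : C.L = 1 / (1 - C.q) := rfl
  have hp := C.qpow_pos j
  rw [pow_succ]
  have hqL : C.q * C.L ≤ C.ε / 8 := by
    rw [hL]
    rw [mul_one_div, div_le_div_iff₀ h (by norm_num)]
    nlinarith
  calc C.q ^ j * C.q * C.L = (C.q * C.L) * C.q ^ j := by ring
    _ ≤ C.ε / 8 * C.q ^ j := by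
        apply mul_le_mul_of_nonneg_right hqL (le_of_lt hp)

lemma geom_eq : geomProg C.q = Set.range C.s := by
  ext x
  constructor
  · rintro (rfl | ⟨i, _, rfl⟩)
    · exact ⟨0, C.s0⟩
    · exact ⟨i, rfl⟩
  · rintro ⟨i, rfl⟩
    rcases Nat.eq_zero_or_pos i with rfl | hi
    · left; exact C.s0
    · right; exact ⟨i, hi, rfl⟩

/-- summed increment bounds -/
lemma gsum (g : ℕ → ℝ) (hinc : ∀ i, 0 ≤ g (i+1) - g i ∧ g (i+1) - g i ≤ C.ε * C.q ^ i) :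
    ∀ i j, i ≤ j → 0 ≤ g j - g i ∧ g j - g i ≤ C.ε * (C.s j - C.s i) := by
  intro i j hij
  induction j, hij using Nat.le_induction with
  | base => simp
  | succ n hn ih =>
    have h1 := hinc n
    have h2 := C.sSucc n
    have h3 : C.s i ≤ C.s n := C.s_mono hn
    constructor
    · linarith [ih.1]
    · have : C.ε * (C.s (n+1) - C.s i) = C.ε * (C.s n - C.s i) + C.ε * C.q ^ n := by
        rw [h2]; ring
      linarith [ih.2]

end Ctx
end MixedAux

namespace MixedAux
namespace Ctx

variable (C : Ctx)

lemma diffPhi (a₁ b₁ a₂ b₂ : ℝ) :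
    (a₁ • C.u + b₁ • C.v) - (a₂ • C.u + b₂ • C.v) = (a₁ - a₂) • C.u + (b₁ - b₂) • C.v := by
  rw [sub_smul, sub_smul]; abel

/-- Generic copy builder: a sequence of points realizing the distances of G(q),
all of one colour, contradicts `Hno`. -/
lemma mkCopy (f : ℕ → Fin 2 → ℝ) (c₀ : Fin 2)
    (hd : ∀ i j, i ≤ j → C.N (f j - f i) = C.s j - C.s i)
    (hc : ∀ i, C.col (f i) = c₀) : False := by
  classical
  set F : ℝ → (Fin 2 → ℝ) := fun t => if h : ∃ i, C.s i = t then f h.choose else f 0 with hF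
  have hFs : ∀ i : ℕ, F (C.s i) = f i := by
    intro i
    have h : ∃ j, C.s j = C.s i := ⟨i, rfl⟩
    have : h.choose = i := C.s_inj h.choose_spec
    simp only [hF, dif_pos h, this]
  have hdist : ∀ x ∈ geomProg C.q, ∀ y ∈ geomProg C.q, C.N (F x - F y) = |x - y| := by
    intro x hx y hy
    rw [C.geom_eq] at hx hy
    obtain ⟨i, rfl⟩ := hx
    obtain ⟨j, rfl⟩ := hy
    rw [hFs, hFs]
    rcases le_total j i with h | h
    · rw [hd j i h, abs_of_nonneg (by linarith [C.s_mono h] : (0:ℝ) ≤ C.s i - C.s j)]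
    · have heq : f i - f j = -(f j - f i) := by abel
      rw [heq, C.Nneg, hd i j h, abs_of_nonpos (by linarith [C.s_mono h] : C.s i - C.s j ≤ 0)]
      ring
  have hinj : Set.InjOn F (geomProg C.q) := by
    intro x hx y hy hxy
    by_contra hne
    have h1 := hdist x hx y hy
    rw [hxy, sub_self, C.N0] at h1
    have : x - y ≠ 0 := sub_ne_zero.mpr hne
    exact this (abs_eq_zero.mp h1.symm)
  have hiso : IsometricCopyOfReals C.N (geomProg C.q) (F '' geomProg C.q) :=
    ⟨F, hinj.bijOn_image, hdist⟩
  obtain ⟨z, hz, w, hw, hne⟩ := C.Hno _ hiso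
  obtain ⟨x, hx, rfl⟩ := hz
  obtain ⟨y, hy, rfl⟩ := hw
  rw [C.geom_eq] at hx hy
  obtain ⟨i, rfl⟩ := hx
  obtain ⟨j, rfl⟩ := hy
  rw [hFs, hFs, hc i, hc j] at hne
  exact hne rfl

/-- Horizontal-form copies: columns are x₀ + s i, rows η i with small nonneg increments. -/
lemma copyH (x₀ : ℝ) (η : ℕ → ℝ) (c₀ : Fin 2)
    (hinc : ∀ i, 0 ≤ η (i+1) - η i ∧ η (i+1) - η i ≤ C.ε * C.q ^ i)
    (hc : ∀ i, C.colr (x₀ + C.s i) (η i) = c₀) : False := by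
  apply C.mkCopy (fun i => (x₀ + C.s i) • C.u + (η i) • C.v) c₀
  · intro i j hij
    rw [C.diffPhi]
    have hb := C.gsum η hinc i j hij
    have := C.Hreg (C.s j - C.s i) (η j - η i) hb.1 hb.2
    convert this using 3 <;> ring
  · intro i; exact hc i

/-- Vertical-form copies: rows are y₀ + s i, columns ξ i with small increments of sign σ. -/
lemma copyV (y₀ : ℝ) (ξ : ℕ → ℝ) (c₀ : Fin 2)
    (hinc : ∀ i, 0 ≤ C.σ * (ξ (i+1) - ξ i) ∧ C.σ * (ξ (i+1) - ξ i) ≤ C.ε * C.q ^ i)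
    (hc : ∀ i, C.colr (ξ i) (y₀ + C.s i) = c₀) : False := by
  apply C.mkCopy (fun i => (ξ i) • C.u + (y₀ + C.s i) • C.v) c₀
  · intro i j hij
    rw [C.diffPhi]
    have hinc' : ∀ i, 0 ≤ (fun k => C.σ * ξ k) (i+1) - (fun k => C.σ * ξ k) i ∧
        (fun k => C.σ * ξ k) (i+1) - (fun k => C.σ * ξ k) i ≤ C.ε * C.q ^ i := by
      intro i
      have he : C.σ * (ξ (i+1) - ξ i) = C.σ * ξ (i+1) - C.σ * ξ i := by ring
      have h1 := (hinc i).1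
      have h2 := (hinc i).2
      rw [he] at h1 h2
      exact ⟨h1, h2⟩
    have hb := C.gsum (fun k => C.σ * ξ k) hinc' i j hij
    have ha : C.σ * ξ j - C.σ * ξ i = C.σ * (ξ j - ξ i) := by ring
    rw [ha] at hb
    have := C.Vreg (C.σ * (ξ j - ξ i)) (C.s j - C.s i) hb.1 hb.2
    have hσu : (C.σ * (C.σ * (ξ j - ξ i))) • C.u = (ξ j - ξ i) • C.u := by
      rw [← mul_assoc, C.σσ, one_mul]
    rw [hσu] at this
    convert this using 3
    ring
  · intro i; exact hc i

end Ctx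
end MixedAux

namespace MixedAux

lemma fin2_other : ∀ a c : Fin 2, a ≠ c → a = 1 - c := by decide

namespace Ctx

variable (C : Ctx)

lemma gap2 (j : ℕ) : C.q ^ j * C.L = C.q ^ j + C.q ^ (j+1) * C.L := by
  have h := C.L_eq
  calc C.q ^ j * C.L = C.q ^ j * ((1 - C.q) * C.L) + C.q ^ (j+1) * C.L := by ring
    _ = C.q ^ j + C.q ^ (j+1) * C.L := by rw [h]; ring

/-- decompose a point of the extended interval as `x₁ - σ * d`. -/
lemma sgn_decomp (a w t x' : ℝ) (hw : 0 ≤ w) (ht : 0 ≤ t)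
    (h1 : a - (if C.σ = 1 then t else 0) ≤ x')
    (h2 : x' ≤ a - (if C.σ = 1 then t else 0) + (w + t)) :
    ∃ x₁ d, a ≤ x₁ ∧ x₁ ≤ a + w ∧ 0 ≤ d ∧ d ≤ t ∧ x' = x₁ - C.σ * d := by
  rcases C.hσ with hσ | hσ
  · rw [if_pos hσ] at h1 h2
    by_cases hxa : a ≤ x'
    · exact ⟨x', 0, hxa, by linarith, le_refl 0, ht, by rw [hσ]; ring⟩
    · exact ⟨a, a - x', le_refl a, by linarith, by linarith, by linarith,
        by rw [hσ]; ring⟩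
  · have hσ' : ¬ (C.σ = 1) := by rw [hσ]; norm_num
    rw [if_neg hσ', sub_zero] at h1 h2
    by_cases hxa : x' ≤ a + w
    · exact ⟨x', 0, h1, hxa, le_refl 0, ht, by rw [hσ]; ring⟩
    · exact ⟨a + w, x' - (a + w), by linarith, le_refl _, by linarith, by linarith,
        by rw [hσ]; ring⟩

/-- membership in the σ-sided window `{x₀ - σ r : r ∈ [0,t]}`. -/
lemma sgn_window (x₀ t x : ℝ) (ht : 0 ≤ t)
    (h1 : x₀ - (if C.σ = 1 then t else 0) ≤ x)
    (h2 : x ≤ x₀ - (if C.σ = 1 then t else 0) + t) :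
    ∃ r, 0 ≤ r ∧ r ≤ t ∧ x = x₀ - C.σ * r := by
  rcases C.hσ with hσ | hσ
  · rw [if_pos hσ] at h1 h2
    exact ⟨x₀ - x, by linarith, by linarith, by rw [hσ]; ring⟩
  · have hσ' : ¬ (C.σ = 1) := by rw [hσ]; norm_num
    rw [if_neg hσ', sub_zero] at h1 h2
    exact ⟨x - x₀, by linarith, by linarith, by rw [hσ]; ring⟩

/-- The vertical flip: from a solid rectangle, either a monochromatic copy exists
(contradiction via `copyV` / smaller-scale solids via IH), or the window-union
rectangle is solid in the other colour. -/
lemma flipV (j : ℕ)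
    (IH : ∀ i, i < j → ∀ (c₁ : Fin 2) (A₂ B₂ h₂ : ℝ), 0 ≤ h₂ →
        C.Solid c₁ A₂ B₂ (C.ε * C.q ^ i) h₂ → False)
    (c₀ : Fin 2) (A B w h : ℝ) (hw : 0 ≤ w)
    (hS : C.Solid c₀ A B w h) :
    C.Solid (1 - c₀) (A - (if C.σ = 1 then C.ε * C.q ^ j else 0)) (B - C.q ^ j)
      (w + C.ε * C.q ^ j) (h - C.q ^ (j+1) * C.L) := by
  intro x' y' hx1 hx2 hy1 hy2
  by_contra hne
  have hc' : C.colr x' y' = c₀ := by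
    by_contra hcc
    exact hne (fin2_other _ _ hcc)
  have htpos : (0:ℝ) ≤ C.ε * C.q ^ j := le_of_lt (mul_pos C.hε0 (C.qpow_pos j))
  obtain ⟨x₁, d, hx₁1, hx₁2, hd0, hd1, hxd⟩ :=
    C.sgn_decomp A w (C.ε * C.q ^ j) x' hw htpos hx1 (by linarith)
  set Y := y' - C.s j with hYdef
  have hYj : Y + C.s j = y' := by rw [hYdef]; ring
  -- downward chain construction
  have down : ∀ m : ℕ, m ≤ j → ∃ ξ : ℕ → ℝ,
      ξ j = x' ∧
      (∀ k, j - m ≤ k → k < j →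
        0 ≤ C.σ * (ξ (k+1) - ξ k) ∧ C.σ * (ξ (k+1) - ξ k) ≤ C.ε * C.q ^ k) ∧
      (∀ k, j - m ≤ k → k ≤ j → C.colr (ξ k) (Y + C.s k) = c₀) := by
    intro m
    induction m with
    | zero =>
      intro _
      refine ⟨fun _ => x', rfl, ?_, ?_⟩
      · intro k hk1 hk2; omega
      · intro k hk1 hk2
        have hkj : k = j := by omega
        subst hkj
        rw [hYj]; exact hc'
    | succ m ihm =>
      intro hmj
      obtain ⟨ξ, hξj, hξinc, hξcol⟩ := ihm (by omega)
      have hi1 : 1 ≤ j - m := by omega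
      set i := j - m with hidef
      have hwl : (0:ℝ) ≤ C.ε * C.q ^ (i-1) := le_of_lt (mul_pos C.hε0 (C.qpow_pos _))
      by_cases hh : ∃ r, 0 ≤ r ∧ r ≤ C.ε * C.q ^ (i-1) ∧
          C.colr (ξ i - C.σ * r) (Y + C.s (i-1)) = c₀
      · obtain ⟨r, hr0, hr1, hrc⟩ := hh
        refine ⟨Function.update ξ (i-1) (ξ i - C.σ * r), ?_, ?_, ?_⟩
        · rw [Function.update_of_ne (by omega : j ≠ i - 1)]; exact hξj
        · intro k hk1 hk2
          by_cases hki : k = i - 1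
          · subst hki
            rw [Function.update_self, Function.update_of_ne (by omega : i - 1 + 1 ≠ i - 1)]
            have hi' : i - 1 + 1 = i := by omega
            rw [hi']
            have hs : C.σ * (ξ i - (ξ i - C.σ * r)) = (C.σ * C.σ) * r := by ring
            rw [hs, C.σσ, one_mul]
            exact ⟨hr0, hr1⟩
          · rw [Function.update_of_ne (by omega : k + 1 ≠ i - 1),
              Function.update_of_ne hki]
            exact hξinc k (by omega) hk2
        · intro k hk1 hk2
          by_cases hki : k = i - 1
          · subst hki
            rw [Function.update_self]
            exact hrc
          · rw [Function.update_of_ne hki]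
            exact hξcol k (by omega) hk2
      · exfalso
        push_neg at hh
        apply IH (i-1) (by omega) (1 - c₀)
          (ξ i - (if C.σ = 1 then C.ε * C.q ^ (i-1) else 0)) (Y + C.s (i-1)) 0 le_rfl
        intro x y hx1' hx2' hy1' hy2'
        have hy : y = Y + C.s (i-1) := le_antisymm (by linarith) hy1'
        obtain ⟨r, hr0, hr1, hxr⟩ := C.sgn_window (ξ i) (C.ε * C.q ^ (i-1)) x hwl hx1' (by linarith)
        subst hy
        rw [hxr]
        exact fin2_other _ _ (hh r hr0 hr1)
  obtain ⟨ξ, hξj, hξinc, hξcol⟩ := down j le_rfl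
  -- assemble the full column function
  set Ξ : ℕ → ℝ := fun k => if k ≤ j then ξ k else x₁ with hΞdef
  apply C.copyV Y Ξ c₀
  · intro k
    by_cases hk : k + 1 ≤ j
    · have hk' : k ≤ j := by omega
      simp only [hΞdef, if_pos hk', if_pos hk]
      exact hξinc k (by omega) (by omega)
    · by_cases hk2 : k ≤ j
      · have hkj : k = j := by omega
        subst hkj
        simp only [hΞdef, if_pos (le_refl k), if_neg (by omega : ¬ (k + 1 ≤ k))]
        rw [hξj, hxd]
        have hs : C.σ * (x₁ - (x₁ - C.σ * d)) = (C.σ * C.σ) * d := by ring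
        rw [hs, C.σσ, one_mul]
        exact ⟨hd0, hd1⟩
      · simp only [hΞdef, if_neg hk2, if_neg (by omega : ¬ (k + 1 ≤ j))]
        have : C.σ * (x₁ - x₁) = 0 := by ring
        rw [this]
        exact ⟨le_rfl, le_of_lt (mul_pos C.hε0 (C.qpow_pos k))⟩
  · intro k
    by_cases hk : k ≤ j
    · simp only [hΞdef, if_pos hk]
      exact hξcol k (by omega) hk
    · simp only [hΞdef, if_neg hk]
      apply hS x₁ (Y + C.s k) hx₁1 hx₁2
      · -- B ≤ Y + s k
        have h1 : C.s j + C.q ^ j = C.s (j+1) := (C.sSucc j).symm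
        have h2 : C.s (j+1) ≤ C.s k := C.s_mono (by omega)
        rw [hYdef]; linarith
      · -- Y + s k ≤ B + h
        have h3 : C.s k ≤ C.L := le_of_lt (C.s_lt_L k)
        have h4 : C.L - C.s j = C.q ^ j * C.L := C.s_gap j
        have h5 := C.gap2 j
        rw [hYdef]; linarith

/-- The horizontal flip (mirror image of `flipV`, no sign `σ`). -/
lemma flipH (j : ℕ)
    (IH : ∀ i, i < j → ∀ (c₁ : Fin 2) (A₂ B₂ w₂ : ℝ), 0 ≤ w₂ →
        C.Solid c₁ A₂ B₂ w₂ (C.ε * C.q ^ i) → False)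
    (c₀ : Fin 2) (A B w h : ℝ) (hh0 : 0 ≤ h)
    (hS : C.Solid c₀ A B w h) :
    C.Solid (1 - c₀) (A - C.q ^ j) (B - C.ε * C.q ^ j)
      (w - C.q ^ (j+1) * C.L) (h + C.ε * C.q ^ j) := by
  intro x' y' hx1 hx2 hy1 hy2
  by_contra hne
  have hc' : C.colr x' y' = c₀ := by
    by_contra hcc
    exact hne (fin2_other _ _ hcc)
  have htpos : (0:ℝ) ≤ C.ε * C.q ^ j := le_of_lt (mul_pos C.hε0 (C.qpow_pos j))
  -- one-sided decomposition of the row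
  obtain ⟨y₁, d, hy₁1, hy₁2, hd0, hd1, hyd⟩ :
      ∃ y₁ d, B ≤ y₁ ∧ y₁ ≤ B + h ∧ 0 ≤ d ∧ d ≤ C.ε * C.q ^ j ∧ y' = y₁ - d := by
    by_cases hyb : B ≤ y'
    · exact ⟨y', 0, hyb, by linarith, le_rfl, htpos, by ring⟩
    · exact ⟨B, B - y', le_rfl, by linarith, by linarith, by linarith, by ring⟩
  set X := x' - C.s j with hXdef
  have hXj : X + C.s j = x' := by rw [hXdef]; ring
  have down : ∀ m : ℕ, m ≤ j → ∃ η : ℕ → ℝ,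
      η j = y' ∧
      (∀ k, j - m ≤ k → k < j →
        0 ≤ η (k+1) - η k ∧ η (k+1) - η k ≤ C.ε * C.q ^ k) ∧
      (∀ k, j - m ≤ k → k ≤ j → C.colr (X + C.s k) (η k) = c₀) := by
    intro m
    induction m with
    | zero =>
      intro _
      refine ⟨fun _ => y', rfl, ?_, ?_⟩
      · intro k hk1 hk2; omega
      · intro k hk1 hk2
        have hkj : k = j := by omega
        subst hkj
        rw [hXj]; exact hc'
    | succ m ihm =>
      intro hmj
      obtain ⟨η, hηj, hηinc, hηcol⟩ := ihm (by omega)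
      have hi1 : 1 ≤ j - m := by omega
      set i := j - m with hidef
      have hwl : (0:ℝ) ≤ C.ε * C.q ^ (i-1) := le_of_lt (mul_pos C.hε0 (C.qpow_pos _))
      by_cases hh : ∃ r, 0 ≤ r ∧ r ≤ C.ε * C.q ^ (i-1) ∧
          C.colr (X + C.s (i-1)) (η i - r) = c₀
      · obtain ⟨r, hr0, hr1, hrc⟩ := hh
        refine ⟨Function.update η (i-1) (η i - r), ?_, ?_, ?_⟩
        · rw [Function.update_of_ne (by omega : j ≠ i - 1)]; exact hηj
        · intro k hk1 hk2
          by_cases hki : k = i - 1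
          · subst hki
            rw [Function.update_self, Function.update_of_ne (by omega : i - 1 + 1 ≠ i - 1)]
            have hi' : i - 1 + 1 = i := by omega
            rw [hi']
            constructor <;> linarith
          · rw [Function.update_of_ne (by omega : k + 1 ≠ i - 1),
              Function.update_of_ne hki]
            exact hηinc k (by omega) hk2
        · intro k hk1 hk2
          by_cases hki : k = i - 1
          · subst hki
            rw [Function.update_self]
            exact hrc
          · rw [Function.update_of_ne hki]
            exact hηcol k (by omega) hk2
      · exfalso
        push_neg at hh
        apply IH (i-1) (by omega) (1 - c₀)
          (X + C.s (i-1)) (η i - C.ε * C.q ^ (i-1)) 0 le_rfl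
        intro x y hx1' hx2' hy1' hy2'
        have hx : x = X + C.s (i-1) := le_antisymm (by linarith) hx1'
        have hyr : y = η i - (η i - y) := by ring
        subst hx
        rw [hyr]
        exact fin2_other _ _ (hh (η i - y) (by linarith) (by linarith))
  obtain ⟨η, hηj, hηinc, hηcol⟩ := down j le_rfl
  set Η : ℕ → ℝ := fun k => if k ≤ j then η k else y₁ with hΗdef
  apply C.copyH X Η c₀
  · intro k
    by_cases hk : k + 1 ≤ j
    · have hk' : k ≤ j := by omega
      simp only [hΗdef, if_pos hk', if_pos hk]
      exact hηinc k (by omega) (by omega)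
    · by_cases hk2 : k ≤ j
      · have hkj : k = j := by omega
        subst hkj
        simp only [hΗdef, if_pos (le_refl k), if_neg (by omega : ¬ (k + 1 ≤ k))]
        rw [hηj, hyd]
        constructor <;> linarith
      · simp only [hΗdef, if_neg hk2, if_neg (by omega : ¬ (k + 1 ≤ j))]
        constructor
        · linarith
        · have := mul_pos C.hε0 (C.qpow_pos k); linarith
  · intro k
    by_cases hk : k ≤ j
    · simp only [hΗdef, if_pos hk]
      exact hηcol k (by omega) hk
    · simp only [hΗdef, if_neg hk]
      apply hS (X + C.s k) y₁ ?_ ?_ hy₁1 hy₁2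
      · have h1 : C.s j + C.q ^ j = C.s (j+1) := (C.sSucc j).symm
        have h2 : C.s (j+1) ≤ C.s k := C.s_mono (by omega)
        rw [hXdef]; linarith
      · have h3 : C.s k ≤ C.L := le_of_lt (C.s_lt_L k)
        have h4 : C.L - C.s j = C.q ^ j * C.L := C.s_gap j
        have h5 := C.gap2 j
        rw [hXdef]; linarith

end Ctx
end MixedAux

namespace MixedAux
namespace Ctx

variable (C : Ctx)

/-- No solid monochromatic segment (of either orientation) of length ε·qʲ exists. -/
lemma machine : ∀ j : ℕ,
    (∀ (c₁ : Fin 2) (A B w : ℝ), 0 ≤ w → C.Solid c₁ A B w (C.ε * C.q ^ j) → False) ∧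
    (∀ (c₁ : Fin 2) (A B h : ℝ), 0 ≤ h → C.Solid c₁ A B (C.ε * C.q ^ j) h → False) := by
  intro j
  induction j using Nat.strong_induction_on with
  | _ j IH =>
  have IHV : ∀ i, i < j → ∀ (c₁ : Fin 2) (A₂ B₂ w₂ : ℝ), 0 ≤ w₂ →
      C.Solid c₁ A₂ B₂ w₂ (C.ε * C.q ^ i) → False := fun i hi => (IH i hi).1
  have IHH : ∀ i, i < j → ∀ (c₁ : Fin 2) (A₂ B₂ h₂ : ℝ), 0 ≤ h₂ →
      C.Solid c₁ A₂ B₂ (C.ε * C.q ^ i) h₂ → False := fun i hi => (IH i hi).2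
  have hℓpos : 0 < C.ε * C.q ^ j := mul_pos C.hε0 (C.qpow_pos j)
  have hτℓ : C.q ^ (j+1) * C.L ≤ (C.ε * C.q ^ j) / 8 := by
    have := C.tau_le j; linarith
  have hτpos : 0 < C.q ^ (j+1) * C.L := mul_pos (C.qpow_pos _) C.L_pos
  set ℓ := C.ε * C.q ^ j with hℓdef
  set τ := C.q ^ (j+1) * C.L with hτdef
  set Δ := ℓ - τ with hΔdef
  have hΔpos : 0 < Δ := by rw [hΔdef]; linarith
  have grow : ∀ (c₁ : Fin 2) (A B w h : ℝ), 0 ≤ w → ℓ ≤ h →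
      C.Solid c₁ A B w h → False := by
    intro c₁ A B w h hw hh hS
    have key : ∀ n : ℕ, ∃ (c₂ : Fin 2) (A₂ B₂ w₂ h₂ : ℝ),
        0 ≤ w₂ ∧ (n:ℝ) * Δ ≤ w₂ ∧ ℓ ≤ h₂ ∧ (n:ℝ) * Δ ≤ h₂ ∧
        C.Solid c₂ A₂ B₂ w₂ h₂ := by
      intro n
      induction n with
      | zero =>
        exact ⟨c₁, A, B, w, h, hw, by simpa using hw, hh, by simpa using le_trans hℓpos.le hh, hS⟩
      | succ n ihn =>
        obtain ⟨c₂, A₂, B₂, w₂, h₂, hw₂, hwn, hh₂, hhn, hS₂⟩ := ihn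
        have s1 := C.flipV j IHH c₂ A₂ B₂ w₂ h₂ hw₂ hS₂
        have s2 := C.flipH j IHV (1 - c₂) _ _ (w₂ + C.ε * C.q ^ j)
            (h₂ - C.q ^ (j+1) * C.L) (by simp only [← hℓdef, ← hτdef]; linarith) s1
        refine ⟨_, _, _, _, _, ?_, ?_, ?_, ?_, s2⟩
        · simp only [← hℓdef, ← hτdef]; linarith
        · simp only [← hℓdef, ← hτdef]; push_cast; linarith
        · simp only [← hℓdef, ← hτdef]; linarith
        · simp only [← hℓdef, ← hτdef]; push_cast; linarith
    obtain ⟨n, hn⟩ := exists_nat_ge (C.L / Δ)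
    obtain ⟨c₂, A₂, B₂, w₂, h₂, hw₂, hwn, hh₂, hhn, hS₂⟩ := key n
    have hLh : C.L ≤ h₂ := by
      have h1 : C.L / Δ * Δ ≤ (n:ℝ) * Δ := mul_le_mul_of_nonneg_right hn hΔpos.le
      rw [div_mul_cancel₀ _ hΔpos.ne'] at h1
      linarith
    apply C.copyV B₂ (fun _ => A₂) c₂
    · intro k
      have : C.σ * ((fun _ => A₂) (k+1) - (fun _ => A₂) k) = 0 := by simp
      rw [this]
      exact ⟨le_rfl, (mul_pos C.hε0 (C.qpow_pos k)).le⟩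
    · intro k
      exact hS₂ A₂ (B₂ + C.s k) le_rfl (by linarith) (by linarith [C.s_nonneg k])
        (by linarith [C.s_lt_L k])
  constructor
  · intro c₁ A B w hw hS
    exact grow c₁ A B w ℓ hw le_rfl hS
  · intro c₁ A B h hh hS
    have s1 := C.flipH j IHV c₁ A B ℓ h hh hS
    apply grow _ _ _ _ _ (by simp only [← hℓdef, ← hτdef]; linarith)
      (by simp only [← hℓdef, ← hτdef]; linarith) s1

end Ctx

open Classical in
/-- the greedy staircase -/
noncomputable def Ctx.greedy (D : Ctx) (c₀ : Fin 2) : ℕ → ℝ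
  | 0 => 0
  | (i+1) =>
    if hh : ∃ r, 0 ≤ r ∧ r ≤ D.ε * D.q ^ i ∧
        D.colr (D.s (i+1)) (Ctx.greedy D c₀ i + r) = c₀
    then Ctx.greedy D c₀ i + hh.choose else Ctx.greedy D c₀ i

lemma Ctx.final (C : Ctx) : False := by
  classical
  set c₀ := C.colr 0 0 with hc₀
  by_cases hall : ∀ i : ℕ, ∃ r, 0 ≤ r ∧ r ≤ C.ε * C.q ^ i ∧
      C.colr (C.s (i+1)) (C.greedy c₀ i + r) = c₀
  · apply C.copyH 0 (C.greedy c₀) c₀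
    · intro i
      have h := hall i
      have heq : C.greedy c₀ (i+1) = C.greedy c₀ i + h.choose := by
        rw [greedy, dif_pos h]
      rw [heq]
      have hs := h.choose_spec
      constructor
      · linarith [hs.1]
      · linarith [hs.2.1]
    · intro i
      cases i with
      | zero =>
        have h0 : C.greedy c₀ 0 = 0 := rfl
        rw [zero_add, C.s0, h0]
      | succ i =>
        have h := hall i
        have heq : C.greedy c₀ (i+1) = C.greedy c₀ i + h.choose := by
          rw [greedy, dif_pos h]
        rw [heq, zero_add]
        exact h.choose_spec.2.2
  · push_neg at hall
    obtain ⟨i, hi⟩ := hall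
    apply (C.machine i).1 (1 - c₀) (C.s (i+1)) (C.greedy c₀ i) 0 le_rfl
    intro x y hx1 hx2 hy1 hy2
    have hx : x = C.s (i+1) := le_antisymm (by linarith) hx1
    subst hx
    have hyr : y = C.greedy c₀ i + (y - C.greedy c₀ i) := by ring
    rw [hyr]
    exact fin2_other _ _ (hi (y - C.greedy c₀ i) (by linarith) (by linarith))

end MixedAux

namespace MixedAux

/-- From a point on a spherical segment, a uniform one-sided flat direction. -/
lemma seg_flat (N : (Fin 2 → ℝ) → ℝ) {a b : Fin 2 → ℝ} (hab : a ≠ b)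
    (hsph : segment ℝ a b ⊆ {x | N x = 1}) {p : Fin 2 → ℝ} (hp : p ∈ segment ℝ a b) :
    ∃ w : Fin 2 → ℝ, (∃ e : ℝ, e ≠ 0 ∧ w = e • (b - a)) ∧
      ∀ s : ℝ, 0 ≤ s → s ≤ 1 → N (p + s • w) = 1 := by
  rw [segment_eq_image'] at hp
  obtain ⟨θ, hθ, rfl⟩ := hp
  obtain ⟨hθ0, hθ1⟩ := hθ
  by_cases hθhalf : θ ≤ 1/2
  · refine ⟨(1/2 : ℝ) • (b - a), ⟨1/2, by norm_num, rfl⟩, ?_⟩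
    intro s hs0 hs1
    have heq : a + θ • (b - a) + s • ((1/2 : ℝ) • (b - a)) = a + (θ + s/2) • (b - a) := by
      rw [smul_smul, add_smul]
      have : s * (1/2) = s / 2 := by ring
      rw [this]
      abel
    rw [heq]
    apply hsph
    rw [segment_eq_image']
    exact ⟨θ + s/2, ⟨by linarith, by linarith⟩, rfl⟩
  · refine ⟨(-(1/2) : ℝ) • (b - a), ⟨-(1/2), by norm_num, rfl⟩, ?_⟩
    intro s hs0 hs1
    have heq : a + θ • (b - a) + s • ((-(1/2) : ℝ) • (b - a)) = a + (θ - s/2) • (b - a) := by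
      rw [smul_smul, sub_smul]
      have : s * (-(1/2)) = -(s / 2) := by ring
      rw [this]
      rw [neg_smul]
      abel
    rw [heq]
    apply hsph
    rw [segment_eq_image']
    exact ⟨θ - s/2, ⟨by linarith, by linarith⟩, rfl⟩

/-- Geometric normalization: produce the flat-regime data for the combinatorial core. -/
lemma normalize (N : (Fin 2 → ℝ) → ℝ) (hN : IsNorm2 N)
    (x₁ x₂ : Fin 2 → ℝ)
    (a₁ b₁ a₂ b₂ : Fin 2 → ℝ) (hab₁ : a₁ ≠ b₁) (hab₂ : a₂ ≠ b₂)
    (hI₁sphere : segment ℝ a₁ b₁ ⊆ {x : Fin 2 → ℝ | N x = 1})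
    (hI₂sphere : segment ℝ a₂ b₂ ⊆ {x : Fin 2 → ℝ | N x = 1})
    (hI₁par : ∃ c : ℝ, b₁ - a₁ = c • x₁)
    (hI₂par : ∃ c : ℝ, b₂ - a₂ = c • x₂)
    (hline₁ : ∃ t : ℝ, t • x₁ ∈ segment ℝ a₂ b₂)
    (hline₂ : ∃ t : ℝ, t • x₂ ∈ segment ℝ a₁ b₁) :
    ∃ (u v : Fin 2 → ℝ) (σ ε : ℝ), (σ = 1 ∨ σ = -1) ∧ 0 < ε ∧
      (∀ a b : ℝ, 0 ≤ b → b ≤ ε * a → N (a • u + b • v) = a) ∧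
      (∀ a b : ℝ, 0 ≤ a → a ≤ ε * b → N ((σ * a) • u + b • v) = b) := by
  have hN0 : N 0 = 0 := (hN.1 0).mpr rfl
  have hNsmul := hN.2.1
  obtain ⟨t, hti⟩ := hline₁
  obtain ⟨t', hti'⟩ := hline₂
  set u : Fin 2 → ℝ := t • x₁ with hu
  set v' : Fin 2 → ℝ := t' • x₂ with hv'
  have hu1 : N u = 1 := hI₂sphere hti
  have hv1 : N v' = 1 := hI₁sphere hti'
  have ht' : t' ≠ 0 := by
    intro h
    rw [h, zero_smul] at hv'
    rw [hv', hN0] at hv1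
    norm_num at hv1
  have ht : t ≠ 0 := by
    intro h
    rw [h, zero_smul] at hu
    rw [hu, hN0] at hu1
    norm_num at hu1
  obtain ⟨c₂, hc₂⟩ := hI₂par
  obtain ⟨c₁, hc₁⟩ := hI₁par
  obtain ⟨w2, ⟨e2, he2, hw2e⟩, hw2flat⟩ := seg_flat N hab₂ hI₂sphere hti
  obtain ⟨w1, ⟨e1, he1, hw1e⟩, hw1flat⟩ := seg_flat N hab₁ hI₁sphere hti'
  have hw2ne : w2 ≠ 0 := by
    rw [hw2e]
    exact smul_ne_zero he2 (sub_ne_zero.mpr (Ne.symm hab₂))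
  have hw1ne : w1 ≠ 0 := by
    rw [hw1e]
    exact smul_ne_zero he1 (sub_ne_zero.mpr (Ne.symm hab₁))
  -- w2 = γ • v'
  set γ : ℝ := e2 * c₂ / t' with hγ
  have hw2v : w2 = γ • v' := by
    rw [hw2e, hc₂, hv', smul_smul, hγ, smul_smul]
    congr 1
    field_simp
  have hγne : γ ≠ 0 := by
    intro h
    rw [h, zero_smul] at hw2v
    exact hw2ne hw2v
  set γ' : ℝ := e1 * c₁ / t with hγ'
  have hw1u : w1 = γ' • u := by
    rw [hw1e, hc₁, hu, smul_smul, hγ', smul_smul]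
    congr 1
    field_simp
  have hγ'ne : γ' ≠ 0 := by
    intro h
    rw [h, zero_smul] at hw1u
    exact hw1ne hw1u
  set sgn₂ : ℝ := if 0 < γ then 1 else -1 with hsgn₂
  set sgn₁ : ℝ := if 0 < γ' then 1 else -1 with hsgn₁
  have hsgn₂γ : sgn₂ * |γ| = γ := by
    rcases lt_or_gt_of_ne hγne with h | h
    · rw [hsgn₂, if_neg (by linarith), abs_of_neg h]; ring
    · rw [hsgn₂, if_pos h, abs_of_pos h]; ring
  have hsgn₁γ : sgn₁ * |γ'| = γ' := by
    rcases lt_or_gt_of_ne hγ'ne with h | h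
    · rw [hsgn₁, if_neg (by linarith), abs_of_neg h]; ring
    · rw [hsgn₁, if_pos h, abs_of_pos h]; ring
  have hsgn₂sq : sgn₂ * sgn₂ = 1 := by
    rcases ite_eq_or_eq (0 < γ) (1:ℝ) (-1) with h | h <;> rw [hsgn₂, h] <;> norm_num
  have habs2 : |sgn₂| = 1 := by
    rcases ite_eq_or_eq (0 < γ) (1:ℝ) (-1) with h | h <;> rw [hsgn₂, h] <;> norm_num
  set v : Fin 2 → ℝ := sgn₂ • v' with hv
  set σ : ℝ := sgn₁ * sgn₂ with hσdef
  set ε : ℝ := min |γ| |γ'| with hε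
  have hεpos : 0 < ε := lt_min (abs_pos.mpr hγne) (abs_pos.mpr hγ'ne)
  have hγabs : 0 < |γ| := abs_pos.mpr hγne
  have hγ'abs : 0 < |γ'| := abs_pos.mpr hγ'ne
  have hneγ : |γ| ≠ 0 := hγabs.ne'
  have hneγ' : |γ'| ≠ 0 := hγ'abs.ne'
  -- Claim A
  have claimA : ∀ r : ℝ, 0 ≤ r → r ≤ ε → N (u + r • v) = 1 := by
    intro r hr0 hr1
    have hsc : r * sgn₂ = r / |γ| * γ := by
      field_simp
      linear_combination r * hsgn₂γ
    have key : u + r • v = u + (r / |γ|) • w2 := by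
      calc u + r • v = u + (r * sgn₂) • v' := by rw [hv]; module
        _ = u + (r / |γ| * γ) • v' := by rw [hsc]
        _ = u + (r / |γ|) • w2 := by rw [hw2v]; module
    rw [key]
    exact hw2flat (r / |γ|) (div_nonneg hr0 hγabs.le)
      ((div_le_one hγabs).mpr (le_trans hr1 (min_le_left _ _)))
  -- Claim B
  have claimB : ∀ r : ℝ, 0 ≤ r → r ≤ ε → N (v + (r * σ) • u) = 1 := by
    intro r hr0 hr1
    have hsc' : r * σ = sgn₂ * (r / |γ'|) * γ' := by
      rw [hσdef]
      field_simp
      linear_combination (r * sgn₂) * hsgn₁γ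
    have key : v + (r * σ) • u = sgn₂ • (v' + (r / |γ'|) • w1) := by
      calc v + (r * σ) • u = sgn₂ • v' + (sgn₂ * (r / |γ'|) * γ') • u := by
            rw [hv, hsc']
        _ = sgn₂ • (v' + (r / |γ'|) • w1) := by
            rw [hw1u]; module
    rw [key, hNsmul, habs2, one_mul]
    exact hw1flat (r / |γ'|) (div_nonneg hr0 hγ'abs.le)
      ((div_le_one hγ'abs).mpr (le_trans hr1 (min_le_right _ _)))
  refine ⟨u, v, σ, ε, ?_, hεpos, ?_, ?_⟩
  · rcases ite_eq_or_eq (0 < γ') (1:ℝ) (-1) with h1 | h1 <;>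
      rcases ite_eq_or_eq (0 < γ) (1:ℝ) (-1) with h2 | h2 <;>
      rw [hσdef, hsgn₁, hsgn₂, h1, h2] <;> norm_num
  · -- Hreg
    intro a b hb hba
    have ha : 0 ≤ a := by nlinarith
    rcases eq_or_lt_of_le ha with h0 | hpos
    · have ha0 : a = 0 := h0.symm
      have hb0 : b = 0 := by nlinarith
      rw [ha0, hb0, zero_smul, zero_smul, add_zero, hN0]
    · have hba : a * (b / a) = b := by field_simp
      have key : a • u + b • v = a • (u + (b / a) • v) := by
        calc a • u + b • v = a • u + (a * (b / a)) • v := by rw [hba]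
          _ = a • (u + (b / a) • v) := by module
      rw [key, hNsmul, abs_of_pos hpos,
        claimA (b / a) (div_nonneg hb hpos.le) ((div_le_iff₀ hpos).mpr (by linarith)),
        mul_one]
  · -- Vreg
    intro a b ha hab
    have hb : 0 ≤ b := by nlinarith
    rcases eq_or_lt_of_le hb with h0 | hpos
    · have hb0 : b = 0 := h0.symm
      have ha0 : a = 0 := by nlinarith
      rw [ha0, hb0, mul_zero, zero_smul, zero_smul, add_zero, hN0]
    · have hba : b * (a / b * σ) = σ * a := by field_simp
      have key : (σ * a) • u + b • v = b • (v + ((a / b) * σ) • u) := by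
        calc (σ * a) • u + b • v = (b * (a / b * σ)) • u + b • v := by rw [hba]
          _ = b • (v + ((a / b) * σ) • u) := by module
      rw [key, hNsmul, abs_of_pos hpos,
        claimB (a / b) (div_nonneg ha hpos.le) ((div_le_iff₀ hpos).mpr (by linarith)),
        mul_one]

end MixedAux


/-- Mixed norms: suppose the unit sphere of `N` contains nondegenerate segments `I₁ ∥ x¹`
and `I₂ ∥ x²`, the line through the origin in direction `x¹` meets `I₂`, and the line
through the origin in direction `x²` meets `I₁`. Then there is `q₀ > 0` such that for all
`0 < q < q₀`, every two-colouring of the plane contains a monochromatic `N`-isometric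
copy of G(q). -/
theorem mixed_norm_monochromatic_geomProg (N : (Fin 2 → ℝ) → ℝ) (hN : IsNorm2 N)
    (x₁ x₂ : Fin 2 → ℝ) (hx₁ : x₁ ≠ 0) (hx₂ : x₂ ≠ 0)
    (a₁ b₁ a₂ b₂ : Fin 2 → ℝ) (hab₁ : a₁ ≠ b₁) (hab₂ : a₂ ≠ b₂)
    (hI₁sphere : segment ℝ a₁ b₁ ⊆ {x : Fin 2 → ℝ | N x = 1})
    (hI₂sphere : segment ℝ a₂ b₂ ⊆ {x : Fin 2 → ℝ | N x = 1})
    (hI₁par : ∃ c : ℝ, b₁ - a₁ = c • x₁)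
    (hI₂par : ∃ c : ℝ, b₂ - a₂ = c • x₂)
    (hline₁ : ∃ t : ℝ, t • x₁ ∈ segment ℝ a₂ b₂)
    (hline₂ : ∃ t : ℝ, t • x₂ ∈ segment ℝ a₁ b₁) :
    ∃ q₀ : ℝ, 0 < q₀ ∧ ∀ q : ℝ, 0 < q → q < q₀ →
      ∀ c : (Fin 2 → ℝ) → Fin 2,
        ∃ M' : Set (Fin 2 → ℝ), IsometricCopyOfReals N (geomProg q) M' ∧
          ∀ z ∈ M', ∀ w ∈ M', c z = c w := by
  obtain ⟨u, v, σ, ε, hσ, hεpos, Hreg, Vreg⟩ :=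
    MixedAux.normalize N hN x₁ x₂ a₁ b₁ a₂ b₂ hab₁ hab₂ hI₁sphere hI₂sphere
      hI₁par hI₂par hline₁ hline₂
  refine ⟨min ε 1 / 9, by positivity, ?_⟩
  intro q hq0 hq1 c
  by_contra hno
  push_neg at hno
  have h9ε : 9 * q ≤ ε := by
    have h1 : min ε 1 ≤ ε := min_le_left _ _
    linarith
  have h91 : 9 * q ≤ 1 := by
    have h1 : min ε 1 ≤ 1 := min_le_right _ _
    linarith
  exact MixedAux.Ctx.final
    { N := N, u := u, v := v, σ := σ, ε := ε, q := q, col := c,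
      hσ := hσ, hε0 := hεpos, hq0 := hq0, hqε := h9ε, hq1 := h91,
      Hreg := Hreg, Vreg := Vreg, Nsmul := hN.2.1, Hno := hno }
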